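/- arXiv:1906.04090 — 2 statements merged into one kernel-verified Lean document; each statement's English description precedes it below -/
import Mathlib

section
/- Let Q : ℂ^{N_r} → ℂ^{N_r} be a measurable map satisfying Q(i·r) = i·Q(r) for all r ∈ ℂ^{N_r} (where i is the imaginary unit and multiplication is componentwise scalar multiplication), let H ∈ ℂ^{N_r×N_t} and x ∈ ℂ^{N_t} be deterministic, and let z be a ℂ^{N_r}-valued random vector whose distribution is invariant under multiplication by i (i·z has the same law as z). Then Q(H(i·x)+z) has the same distribution as i·Q(Hx+z); in particular, if Q(Hx+z) is integrable, then E[Q(H(i·x)+z)] = i·E[Q(Hx+z)]. -/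
open MeasureTheory

/-- Condition-2 part of Proposition 1: with a quantizer commuting with
multiplication by `i` and noise whose law is invariant under multiplication
by `i`, the quantized output for the `i`-rotated label has the law of the
`i`-rotated quantized output for the original label; in particular the
conditional means are `i`-rotations of each other. -/
theorem quantizer_rotation_label_rotation
    {Nr Nt : ℕ} {Ω : Type*} [MeasurableSpace Ω]
    (P : Measure Ω) [IsProbabilityMeasure P]
    (Q : (Fin Nr → ℂ) → (Fin Nr → ℂ)) (hQmeas : Measurable Q)
    (hQrot : ∀ r : Fin Nr → ℂ, Q (Complex.I • r) = Complex.I • Q r)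
    (H : Matrix (Fin Nr) (Fin Nt) ℂ) (x : Fin Nt → ℂ)
    (z : Ω → (Fin Nr → ℂ)) (hz : Measurable z)
    (hzrot : P.map (fun ω => Complex.I • z ω) = P.map z) :
    P.map (fun ω => Q (H.mulVec (Complex.I • x) + z ω)) =
      P.map (fun ω => Complex.I • Q (H.mulVec x + z ω)) ∧
    (Integrable (fun ω => Q (H.mulVec x + z ω)) P →
      (∫ ω, Q (H.mulVec (Complex.I • x) + z ω) ∂P) =
        Complex.I • ∫ ω, Q (H.mulVec x + z ω) ∂P) := by
  have hHx : H.mulVec (Complex.I • x) = Complex.I • H.mulVec x := by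
    ext j; simp [Matrix.mulVec, dotProduct, Finset.mul_sum, mul_left_comm]
  set c := H.mulVec x with hc
  have hg : Measurable (fun r : Fin Nr → ℂ => Q (Complex.I • c + r)) :=
    hQmeas.comp (measurable_const.add measurable_id)
  have key : P.map (fun ω => Q (H.mulVec (Complex.I • x) + z ω)) =
      P.map (fun ω => Complex.I • Q (c + z ω)) := by
    calc P.map (fun ω => Q (H.mulVec (Complex.I • x) + z ω))
        = (P.map z).map (fun r => Q (Complex.I • c + r)) := by
          rw [Measure.map_map hg hz]
          congr 1; ext ω; simp [hHx, Function.comp]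
      _ = (P.map (fun ω => Complex.I • z ω)).map (fun r => Q (Complex.I • c + r)) := by
          rw [hzrot]
      _ = P.map (fun ω => Q (Complex.I • c + Complex.I • z ω)) := by
          rw [Measure.map_map hg (show Measurable fun ω => Complex.I • z ω from hz.const_smul Complex.I)]
          rfl
      _ = P.map (fun ω => Complex.I • Q (c + z ω)) := by
          congr 1; ext ω; rw [← smul_add, hQrot]
  refine ⟨key, fun hint => ?_⟩
  have hf1 : Measurable (fun ω => Q (H.mulVec (Complex.I • x) + z ω)) :=
    hQmeas.comp (measurable_const.add hz)
  have hf2 : Measurable (fun ω => Complex.I • Q (c + z ω)) :=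
    (hQmeas.comp (measurable_const.add hz)).const_smul Complex.I
  have h1 : (∫ ω, Q (H.mulVec (Complex.I • x) + z ω) ∂P)
      = ∫ y, y ∂(P.map (fun ω => Q (H.mulVec (Complex.I • x) + z ω))) :=
    (integral_map hf1.aemeasurable aestronglyMeasurable_id).symm
  have h2 : (∫ y, y ∂(P.map (fun ω => Complex.I • Q (c + z ω))))
      = ∫ ω, Complex.I • Q (c + z ω) ∂P :=
    integral_map hf2.aemeasurable aestronglyMeasurable_id
  rw [h1, key, h2, integral_smul]
end

section
/- Let N_r ≥ 1 and let H be a random N_r×2 complex matrix whose entries are i.i.d. CN(0,1), i.e., all real and imaginary parts of the entries are i.i.d. real Gaussians N(0,1/2). Consider the four BPSK labels x_1 = (1,1), x_2 = (1,−1), x_3 = (−1,1), x_4 = (−1,−1) in ℂ². Define the events E_k = {sign(Hx_1) = sign(Hx_k)} for k = 2,3,4. Then: (a) P[E_4] = 0; (b) P[E_2 ∩ E_3] = 0; and consequently (c) P[E_2 ∪ E_3 ∪ E_4] = P[E_2] + P[E_3] = 2·(1/2)^{2N_r}. -/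
open MeasureTheory ProbabilityTheory Set
open scoped ENNReal NNReal

/-- The sign function: `+1` if `t ≥ 0` and `-1` if `t < 0`. -/
noncomputable def sgn (t : ℝ) : ℝ := if 0 ≤ t then 1 else -1

lemma sgn_eq_sgn_iff {a b : ℝ} : sgn a = sgn b ↔ (0 ≤ a ↔ 0 ≤ b) := by
  unfold sgn; split_ifs <;> norm_num <;> tauto

lemma sgn_eq_sgn_neg_iff {a : ℝ} : sgn a = sgn (-a) ↔ a = 0 := by
  rw [sgn_eq_sgn_iff]
  constructor
  · intro h; rcases lt_trichotomy a 0 with h1 | h1 | h1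
    · have := h.2 (by linarith); linarith
    · exact h1
    · have := h.1 (by linarith); linarith
  · intro h; subst h; simp

noncomputable def nu : Measure ℝ := gaussianReal 0 (1/2)

instance : IsProbabilityMeasure nu := by unfold nu; infer_instance

lemma nu_singleton (x : ℝ) : nu {x} = 0 :=
  gaussianReal_absolutelyContinuous 0 (by norm_num) (measure_singleton x)

lemma nu_map_neg : nu.map (fun x => -x) = nu := by
  have h := gaussianReal_map_const_mul (μ := 0) (v := 1/2) (-1)
  have h2 : (fun x : ℝ => -1 * x) = fun x => -x := by funext x; ring
  rw [h2] at h
  have h3 : (⟨(-1 : ℝ)^2, sq_nonneg _⟩ : ℝ≥0) = 1 := by ext; norm_num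
  unfold nu; rw [h]; congr 1
  · ring
  · ext; norm_num

noncomputable def nu2 : Measure (ℝ × ℝ) := nu.prod nu

instance : IsProbabilityMeasure nu2 := by unfold nu2; infer_instance

lemma nu2_null_sum : nu2 {p : ℝ × ℝ | p.1 + p.2 = 0} = 0 := by
  have hm : MeasurableSet {p : ℝ × ℝ | p.1 + p.2 = 0} :=
    measurableSet_eq_fun (by fun_prop) measurable_const
  rw [nu2, Measure.prod_apply hm]
  have : ∀ x : ℝ, (Prod.mk x ⁻¹' {p : ℝ × ℝ | p.1 + p.2 = 0}) = {-x} := by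
    intro x; ext y; simp [eq_neg_iff_add_eq_zero, add_comm]
  simp_rw [this, nu_singleton, lintegral_zero]

lemma nu2_null_diff : nu2 {p : ℝ × ℝ | p.1 - p.2 = 0} = 0 := by
  have hm : MeasurableSet {p : ℝ × ℝ | p.1 - p.2 = 0} :=
    measurableSet_eq_fun (by fun_prop) measurable_const
  rw [nu2, Measure.prod_apply hm]
  have : ∀ x : ℝ, (Prod.mk x ⁻¹' {p : ℝ × ℝ | p.1 - p.2 = 0}) = {x} := by
    intro x; ext y; simp [sub_eq_zero, eq_comm]
  simp_rw [this, nu_singleton, lintegral_zero]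

lemma nu2_map_swap : nu2.map Prod.swap = nu2 := Measure.prod_swap

lemma nu2_map_neg : nu2.map (fun p : ℝ × ℝ => (-p.1, -p.2)) = nu2 := by
  have : (fun p : ℝ × ℝ => (-p.1, -p.2)) = Prod.map (fun x : ℝ => -x) (fun x : ℝ => -x) := rfl
  rw [this, nu2, ← Measure.map_prod_map _ _ (by fun_prop) (by fun_prop), nu_map_neg]

lemma nu2_eq_of_symmDiff_null {X Y : Set (ℝ × ℝ)} (h1 : nu2 (X \ Y) = 0)
    (h2 : nu2 (Y \ X) = 0) : nu2 X = nu2 Y :=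
  measure_congr (ae_eq_set.2 ⟨h1, h2⟩)

lemma nu2_null_boundary : nu2 ({p : ℝ × ℝ | p.1 + p.2 = 0} ∪ {p | p.1 - p.2 = 0}) = 0 :=
  measure_union_null nu2_null_sum nu2_null_diff

def As : Set (ℝ × ℝ) := {p | 0 ≤ p.1 + p.2}
def Bs : Set (ℝ × ℝ) := {p | 0 ≤ p.1 - p.2}

lemma measurable_As : MeasurableSet As := measurableSet_le measurable_const (by fun_prop)
lemma measurable_Bs : MeasurableSet Bs := measurableSet_le measurable_const (by fun_prop)

lemma mem_As {p : ℝ × ℝ} : p ∈ As ↔ 0 ≤ p.1 + p.2 := Iff.rfl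
lemma mem_Bs {p : ℝ × ℝ} : p ∈ Bs ↔ 0 ≤ p.1 - p.2 := Iff.rfl

lemma nu2_q1_q2 : nu2 (As ∩ Bs) = nu2 (As ∩ Bsᶜ) := by
  have hm : MeasurableSet (As ∩ Bs) := measurable_As.inter measurable_Bs
  have h1 : nu2 (As ∩ Bs) = nu2 (Prod.swap ⁻¹' (As ∩ Bs)) := by
    conv_lhs => rw [← nu2_map_swap]
    rw [Measure.map_apply measurable_swap hm]
  rw [h1]
  have hpre : Prod.swap ⁻¹' (As ∩ Bs) = {p : ℝ × ℝ | 0 ≤ p.1 + p.2 ∧ p.1 - p.2 ≤ 0} := by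
    ext p
    simp only [Set.preimage_inter, Set.mem_inter_iff, Set.mem_preimage, mem_As, mem_Bs,
      Set.mem_setOf_eq, Prod.fst_swap, Prod.snd_swap]
    constructor
    · rintro ⟨h, h'⟩; exact ⟨by linarith, by linarith⟩
    · rintro ⟨h, h'⟩; exact ⟨by linarith, by linarith⟩
  rw [hpre]
  apply nu2_eq_of_symmDiff_null
  · refine measure_mono_null ?_ nu2_null_diff
    rintro p ⟨⟨hs, hd⟩, hn⟩
    show p.1 - p.2 = 0
    by_contra hne
    exact hn ⟨hs, not_le.mpr (lt_of_le_of_ne hd hne)⟩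
  · refine measure_mono_null ?_ nu2_null_diff
    rintro p ⟨⟨hs, hd⟩, hn⟩
    exact absurd ⟨hs, le_of_lt (not_le.1 hd)⟩ hn

lemma nu2_q1_q4 : nu2 (As ∩ Bs) = nu2 (Asᶜ ∩ Bsᶜ) := by
  have hm : MeasurableSet (As ∩ Bs) := measurable_As.inter measurable_Bs
  have h1 : nu2 (As ∩ Bs) = nu2 ((fun p : ℝ × ℝ => (-p.1, -p.2)) ⁻¹' (As ∩ Bs)) := by
    conv_lhs => rw [← nu2_map_neg]
    rw [Measure.map_apply (by fun_prop) hm]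
  rw [h1]
  have hpre : (fun p : ℝ × ℝ => (-p.1, -p.2)) ⁻¹' (As ∩ Bs)
      = {p : ℝ × ℝ | p.1 + p.2 ≤ 0 ∧ p.1 - p.2 ≤ 0} := by
    ext p
    simp only [Set.preimage_inter, Set.mem_inter_iff, Set.mem_preimage, mem_As, mem_Bs,
      Set.mem_setOf_eq]
    constructor
    · rintro ⟨h, h'⟩; exact ⟨by linarith, by linarith⟩
    · rintro ⟨h, h'⟩; exact ⟨by linarith, by linarith⟩
  rw [hpre]
  apply nu2_eq_of_symmDiff_null
  · refine measure_mono_null ?_ nu2_null_boundary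
    rintro p ⟨⟨hs, hd⟩, hn⟩
    by_cases h0 : p.1 + p.2 = 0
    · exact Or.inl h0
    · right
      show p.1 - p.2 = 0
      by_contra hne
      exact hn ⟨not_le.mpr (lt_of_le_of_ne hs h0), not_le.mpr (lt_of_le_of_ne hd hne)⟩
  · refine measure_mono_null ?_ nu2_null_boundary
    rintro p ⟨⟨hs, hd⟩, hn⟩
    exact absurd ⟨le_of_lt (not_le.1 hs), le_of_lt (not_le.1 hd)⟩ hn

lemma nu2_q3_q2 : nu2 (Asᶜ ∩ Bs) = nu2 (As ∩ Bsᶜ) := by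
  have hm : MeasurableSet (Asᶜ ∩ Bs) := measurable_As.compl.inter measurable_Bs
  have h1 : nu2 (Asᶜ ∩ Bs) = nu2 ((fun p : ℝ × ℝ => (-p.1, -p.2)) ⁻¹' (Asᶜ ∩ Bs)) := by
    conv_lhs => rw [← nu2_map_neg]
    rw [Measure.map_apply (by fun_prop) hm]
  rw [h1]
  have hpre : (fun p : ℝ × ℝ => (-p.1, -p.2)) ⁻¹' (Asᶜ ∩ Bs)
      = {p : ℝ × ℝ | 0 < p.1 + p.2 ∧ p.1 - p.2 ≤ 0} := by
    ext p
    simp only [Set.preimage_inter, Set.mem_inter_iff, Set.mem_preimage, Set.mem_compl_iff,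
      mem_As, mem_Bs, Set.mem_setOf_eq, not_le]
    constructor
    · rintro ⟨h, h'⟩; exact ⟨by linarith, by linarith⟩
    · rintro ⟨h, h'⟩; exact ⟨by linarith, by linarith⟩
  rw [hpre]
  apply nu2_eq_of_symmDiff_null
  · refine measure_mono_null ?_ nu2_null_diff
    rintro p ⟨⟨hs, hd⟩, hn⟩
    show p.1 - p.2 = 0
    by_contra hne
    exact hn ⟨le_of_lt hs, not_le.mpr (lt_of_le_of_ne hd hne)⟩
  · refine measure_mono_null ?_ nu2_null_sum
    rintro p ⟨⟨hs, hd⟩, hn⟩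
    show p.1 + p.2 = 0
    by_contra hne
    exact hn ⟨lt_of_le_of_ne hs (Ne.symm hne), le_of_lt (not_le.1 hd)⟩

lemma nu2_q1 : nu2 (As ∩ Bs) = 1/4 := by
  have hA := measure_inter_add_diff (μ := nu2) As measurable_Bs
  have hAc := measure_inter_add_diff (μ := nu2) Asᶜ measurable_Bs
  rw [Set.diff_eq] at hA hAc
  have htot : nu2 As + nu2 Asᶜ = 1 := by
    rw [measure_add_measure_compl measurable_As, measure_univ]
  rw [← nu2_q1_q2] at hA
  rw [nu2_q3_q2, ← nu2_q1_q2, ← nu2_q1_q4] at hAc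
  have h4 : 4 * nu2 (As ∩ Bs) = 1 := by
    rw [show (4 : ℝ≥0∞) * nu2 (As ∩ Bs) =
      (nu2 (As ∩ Bs) + nu2 (As ∩ Bs)) + (nu2 (As ∩ Bs) + nu2 (As ∩ Bs)) by ring]
    nth_rewrite 2 [hAc]
    rw [hA, htot]
  exact (ENNReal.eq_div_iff (by norm_num) (by norm_num)).mpr h4

def Cset : Set (ℝ × ℝ) := {p | sgn (p.1 + p.2) = sgn (p.1 - p.2)}
def Cset' : Set (ℝ × ℝ) := {p | sgn (p.1 + p.2) = sgn (p.2 - p.1)}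

lemma measurable_Cset : MeasurableSet Cset := by
  have : Cset = (As ∩ Bs) ∪ (Asᶜ ∩ Bsᶜ) := by
    ext p
    simp only [Cset, Set.mem_setOf_eq, sgn_eq_sgn_iff, Set.mem_union, Set.mem_inter_iff,
      Set.mem_compl_iff, mem_As, mem_Bs]
    tauto
  rw [this]
  exact (measurable_As.inter measurable_Bs).union (measurable_As.compl.inter measurable_Bs.compl)

lemma measurable_Cset' : MeasurableSet Cset' := by
  have h : Cset' = Prod.swap ⁻¹' Cset := by
    ext p; simp only [Cset, Cset', Set.mem_preimage, Set.mem_setOf_eq, Prod.fst_swap,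
      Prod.snd_swap, add_comm p.2 p.1]
  rw [h]
  exact measurable_swap measurable_Cset

lemma nu2_Cset : nu2 Cset = 1/2 := by
  have hC : Cset = (As ∩ Bs) ∪ (Asᶜ ∩ Bsᶜ) := by
    ext p
    simp only [Cset, Set.mem_setOf_eq, sgn_eq_sgn_iff, Set.mem_union, Set.mem_inter_iff,
      Set.mem_compl_iff, mem_As, mem_Bs]
    tauto
  rw [hC, measure_union ?_ (measurable_As.compl.inter measurable_Bs.compl)]
  · rw [← nu2_q1_q4, nu2_q1]
    rw [show (1:ℝ≥0∞)/4 + 1/4 = 1/2 by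
      rw [ENNReal.div_add_div_same]
      rw [show (4:ℝ≥0∞) = 2*2 by norm_num, show (1:ℝ≥0∞)+1 = 2 by norm_num,
        ENNReal.div_eq_div_iff (by norm_num) (by norm_num) (by norm_num) (by norm_num)]
      ring]
  · exact Set.disjoint_of_subset (Set.inter_subset_left) (Set.inter_subset_left)
      disjoint_compl_right

lemma nu2_Cset' : nu2 Cset' = 1/2 := by
  have h : Cset' = Prod.swap ⁻¹' Cset := by
    ext p; simp only [Cset, Cset', Set.mem_preimage, Set.mem_setOf_eq, Prod.fst_swap,
      Prod.snd_swap, add_comm p.2 p.1]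
  rw [h, ← Measure.map_apply measurable_swap measurable_Cset, nu2_map_swap, nu2_Cset]

section PhiSec
variable (Nr : ℕ)

def eIdx : ((Fin Nr × Bool) ⊕ (Fin Nr × Bool)) ≃ ((Fin Nr × Fin 2) × Bool) where
  toFun := Sum.elim (fun c => ((c.1, 0), c.2)) (fun c => ((c.1, 1), c.2))
  invFun := fun p => if p.1.2 = 0 then .inl (p.1.1, p.2) else .inr (p.1.1, p.2)
  left_inv := by rintro (⟨m, b⟩ | ⟨m, b⟩) <;> simp
  right_inv := by
    rintro ⟨⟨m, j⟩, b⟩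
    fin_cases j <;> simp

def Phi (f : (Fin Nr × Fin 2) × Bool → ℝ) : (Fin Nr × Bool) → ℝ × ℝ :=
  fun c => (f ((c.1, 0), c.2), f ((c.1, 1), c.2))

lemma measurePreserving_Phi :
    MeasurePreserving (Phi Nr) (Measure.pi fun _ : (Fin Nr × Fin 2) × Bool => nu)
      (Measure.pi fun _ : Fin Nr × Bool => nu2) := by
  have h1 : MeasurePreserving
      (MeasurableEquiv.piCongrLeft (fun _ : (Fin Nr × Fin 2) × Bool => ℝ) (eIdx Nr)).symm
      (Measure.pi fun _ : (Fin Nr × Fin 2) × Bool => nu)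
      (Measure.pi fun _ : (Fin Nr × Bool) ⊕ (Fin Nr × Bool) => nu) :=
    (measurePreserving_piCongrLeft (fun _ : (Fin Nr × Fin 2) × Bool => nu) (eIdx Nr)).symm _
  have h2 : MeasurePreserving
      (MeasurableEquiv.sumPiEquivProdPi (fun _ : (Fin Nr × Bool) ⊕ (Fin Nr × Bool) => ℝ))
      (Measure.pi fun _ => nu)
      ((Measure.pi fun _ : Fin Nr × Bool => nu).prod (Measure.pi fun _ : Fin Nr × Bool => nu)) :=
    measurePreserving_sumPiEquivProdPi (fun _ => nu)
  have h3 : MeasurePreserving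
      (MeasurableEquiv.arrowProdEquivProdArrow ℝ ℝ (Fin Nr × Bool)).symm
      ((Measure.pi fun _ : Fin Nr × Bool => nu).prod (Measure.pi fun _ : Fin Nr × Bool => nu))
      (Measure.pi fun _ : Fin Nr × Bool => nu2) :=
    (measurePreserving_arrowProdEquivProdArrow ℝ ℝ (Fin Nr × Bool)
      (fun _ => nu) (fun _ => nu)).symm _
  have hcomp := h3.comp (h2.comp h1)
  have heq : (MeasurableEquiv.arrowProdEquivProdArrow ℝ ℝ (Fin Nr × Bool)).symm ∘
      (MeasurableEquiv.sumPiEquivProdPi (fun _ : (Fin Nr × Bool) ⊕ (Fin Nr × Bool) => ℝ)) ∘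
      (MeasurableEquiv.piCongrLeft (fun _ : (Fin Nr × Fin 2) × Bool => ℝ) (eIdx Nr)).symm
      = Phi Nr := by
    funext f
    ext c
    · simp [MeasurableEquiv.arrowProdEquivProdArrow, MeasurableEquiv.sumPiEquivProdPi,
        MeasurableEquiv.piCongrLeft, Equiv.arrowProdEquivProdArrow, Equiv.sumPiEquivProdPi,
        Equiv.piCongrLeft, Equiv.piCongrLeft', Phi, eIdx]
    · simp [MeasurableEquiv.arrowProdEquivProdArrow, MeasurableEquiv.sumPiEquivProdPi,
        MeasurableEquiv.piCongrLeft, Equiv.arrowProdEquivProdArrow, Equiv.sumPiEquivProdPi,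
        Equiv.piCongrLeft, Equiv.piCongrLeft', Phi, eIdx]
  rwa [heq] at hcomp

end PhiSec

section PiSec
variable (Nr : ℕ)

lemma muI_pi_Cset :
    Measure.pi (fun _ : (Fin Nr × Fin 2) × Bool => nu)
      (Phi Nr ⁻¹' (Set.univ.pi fun _ : Fin Nr × Bool => Cset)) = (1/2 : ℝ≥0∞) ^ (2 * Nr) := by
  rw [(measurePreserving_Phi Nr).measure_preimage
    (MeasurableSet.univ_pi fun _ => measurable_Cset).nullMeasurableSet,
    Measure.pi_pi]
  simp only [nu2_Cset, Finset.prod_const, Finset.card_univ]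
  congr 1
  simp [Fintype.card_prod, mul_comm]

lemma muI_pi_Cset' :
    Measure.pi (fun _ : (Fin Nr × Fin 2) × Bool => nu)
      (Phi Nr ⁻¹' (Set.univ.pi fun _ : Fin Nr × Bool => Cset')) = (1/2 : ℝ≥0∞) ^ (2 * Nr) := by
  rw [(measurePreserving_Phi Nr).measure_preimage
    (MeasurableSet.univ_pi fun _ => measurable_Cset').nullMeasurableSet,
    Measure.pi_pi]
  simp only [nu2_Cset', Finset.prod_const, Finset.card_univ]
  congr 1
  simp [Fintype.card_prod, mul_comm]

lemma muI_null_sum (m0 : Fin Nr) :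
    Measure.pi (fun _ : (Fin Nr × Fin 2) × Bool => nu)
      {f : ((Fin Nr × Fin 2) × Bool) → ℝ | f ((m0, 0), false) + f ((m0, 1), false) = 0} = 0 := by
  have hset : {f : ((Fin Nr × Fin 2) × Bool) → ℝ | f ((m0, 0), false) + f ((m0, 1), false) = 0}
      = Phi Nr ⁻¹' (Function.eval (m0, false) ⁻¹' {p : ℝ × ℝ | p.1 + p.2 = 0}) := rfl
  have hL : MeasurableSet {p : ℝ × ℝ | p.1 + p.2 = 0} :=
    measurableSet_eq_fun (by fun_prop) measurable_const
  rw [hset, (measurePreserving_Phi Nr).measure_preimage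
    (measurable_pi_apply ((m0, false) : Fin Nr × Bool) hL).nullMeasurableSet]
  exact Measure.pi_eval_preimage_null _ nu2_null_sum

lemma muI_null_diff (m0 : Fin Nr) :
    Measure.pi (fun _ : (Fin Nr × Fin 2) × Bool => nu)
      {f : ((Fin Nr × Fin 2) × Bool) → ℝ | f ((m0, 0), false) - f ((m0, 1), false) = 0} = 0 := by
  have hset : {f : ((Fin Nr × Fin 2) × Bool) → ℝ | f ((m0, 0), false) - f ((m0, 1), false) = 0}
      = Phi Nr ⁻¹' (Function.eval (m0, false) ⁻¹' {p : ℝ × ℝ | p.1 - p.2 = 0}) := rfl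
  have hL : MeasurableSet {p : ℝ × ℝ | p.1 - p.2 = 0} :=
    measurableSet_eq_fun (by fun_prop) measurable_const
  rw [hset, (measurePreserving_Phi Nr).measure_preimage
    (measurable_pi_apply ((m0, false) : Fin Nr × Bool) hL).nullMeasurableSet]
  exact Measure.pi_eval_preimage_null _ nu2_null_diff

end PiSec

/-- The confusion event: the 1-bit quantized noiseless outputs `sign(Hx)` and
`sign(Hx')` agree in every real coordinate. -/
def confusionEvent {Nr : ℕ} {Ω : Type*} (H : Ω → Fin Nr → Fin 2 → ℂ)
    (x x' : Fin 2 → ℂ) : Set Ω :=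
  {ω | ∀ m : Fin Nr,
    sgn (∑ j, H ω m j * x j).re = sgn (∑ j, H ω m j * x' j).re ∧
    sgn (∑ j, H ω m j * x j).im = sgn (∑ j, H ω m j * x' j).im}

/-- Proposition 4 (tightness for BPSK, `Nt = 2`): with `x₁=(1,1)`, `x₂=(1,-1)`,
`x₃=(-1,1)`, `x₄=(-1,-1)`, the event of confusing `x₁` with `x₄` is null, the
events of confusing `x₁` with `x₂` and with `x₃` are a.s. mutually exclusive,
and the union has probability `2·(1/2)^(2Nr)`. -/
theorem bpsk_two_antennas_tight_bound
    {Nr : ℕ} (hNr : 1 ≤ Nr)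
    {Ω : Type*} [MeasurableSpace Ω] (P : Measure Ω) [IsProbabilityMeasure P]
    (H : Ω → Fin Nr → Fin 2 → ℂ) (hH : Measurable H)
    (hlaw : P.map (fun ω (p : (Fin Nr × Fin 2) × Bool) =>
        if p.2 then (H ω p.1.1 p.1.2).im else (H ω p.1.1 p.1.2).re) =
      Measure.pi (fun _ : (Fin Nr × Fin 2) × Bool => gaussianReal 0 (1/2))) :
    P (confusionEvent H ![1, 1] ![-1, -1]) = 0 ∧
    P (confusionEvent H ![1, 1] ![1, -1] ∩ confusionEvent H ![1, 1] ![-1, 1]) = 0 ∧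
    P (confusionEvent H ![1, 1] ![1, -1] ∪ confusionEvent H ![1, 1] ![-1, 1] ∪
        confusionEvent H ![1, 1] ![-1, -1]) =
      P (confusionEvent H ![1, 1] ![1, -1]) + P (confusionEvent H ![1, 1] ![-1, 1]) ∧
    P (confusionEvent H ![1, 1] ![1, -1] ∪ confusionEvent H ![1, 1] ![-1, 1] ∪
        confusionEvent H ![1, 1] ![-1, -1]) =
      2 * (1/2 : ℝ≥0∞) ^ (2 * Nr) := by
  set G : Ω → ((Fin Nr × Fin 2) × Bool) → ℝ := fun ω p =>
    if p.2 then (H ω p.1.1 p.1.2).im else (H ω p.1.1 p.1.2).re with hGdef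
  have hG : Measurable G := by
    apply measurable_pi_lambda
    intro p
    have hcoord : Measurable fun ω => H ω p.1.1 p.1.2 := (hH.eval).eval
    cases hp : p.2
    · simpa [hGdef, hp, Function.comp_def] using Complex.measurable_re.comp hcoord
    · simpa [hGdef, hp, Function.comp_def] using Complex.measurable_im.comp hcoord
  have hlaw' : P.map G = Measure.pi (fun _ : (Fin Nr × Fin 2) × Bool => nu) := hlaw
  set m0 : Fin Nr := ⟨0, hNr⟩ with hm0
  -- re/im of the relevant sums
  have hre : ∀ (ω : Ω) (m : Fin Nr), (∑ j, H ω m j * (![1, 1] : Fin 2 → ℂ) j).re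
      = G ω ((m, 0), false) + G ω ((m, 1), false) := by
    intro ω m; simp [hGdef, Fin.sum_univ_two, Complex.add_re]
  have him : ∀ (ω : Ω) (m : Fin Nr), (∑ j, H ω m j * (![1, 1] : Fin 2 → ℂ) j).im
      = G ω ((m, 0), true) + G ω ((m, 1), true) := by
    intro ω m; simp [hGdef, Fin.sum_univ_two, Complex.add_im]
  have hre2 : ∀ (ω : Ω) (m : Fin Nr), (∑ j, H ω m j * (![1, -1] : Fin 2 → ℂ) j).re
      = G ω ((m, 0), false) - G ω ((m, 1), false) := by
    intro ω m
    simp [hGdef, Fin.sum_univ_two, Complex.add_re, Complex.neg_re, sub_eq_add_neg]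
  have him2 : ∀ (ω : Ω) (m : Fin Nr), (∑ j, H ω m j * (![1, -1] : Fin 2 → ℂ) j).im
      = G ω ((m, 0), true) - G ω ((m, 1), true) := by
    intro ω m
    simp [hGdef, Fin.sum_univ_two, Complex.add_im, Complex.neg_im, sub_eq_add_neg]
  have hre3 : ∀ (ω : Ω) (m : Fin Nr), (∑ j, H ω m j * (![-1, 1] : Fin 2 → ℂ) j).re
      = G ω ((m, 1), false) - G ω ((m, 0), false) := by
    intro ω m
    simp [hGdef, Fin.sum_univ_two, Complex.add_re, Complex.neg_re, sub_eq_add_neg, add_comm]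
  have him3 : ∀ (ω : Ω) (m : Fin Nr), (∑ j, H ω m j * (![-1, 1] : Fin 2 → ℂ) j).im
      = G ω ((m, 1), true) - G ω ((m, 0), true) := by
    intro ω m
    simp [hGdef, Fin.sum_univ_two, Complex.add_im, Complex.neg_im, sub_eq_add_neg, add_comm]
  have hre4 : ∀ (ω : Ω) (m : Fin Nr), (∑ j, H ω m j * (![-1, -1] : Fin 2 → ℂ) j).re
      = -(G ω ((m, 0), false) + G ω ((m, 1), false)) := by
    intro ω m
    simp [hGdef, Fin.sum_univ_two, Complex.add_re, Complex.neg_re]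
    try ring
  have him4 : ∀ (ω : Ω) (m : Fin Nr), (∑ j, H ω m j * (![-1, -1] : Fin 2 → ℂ) j).im
      = -(G ω ((m, 0), true) + G ω ((m, 1), true)) := by
    intro ω m
    simp [hGdef, Fin.sum_univ_two, Complex.add_im, Complex.neg_im]
    try ring
  -- event identifications
  have hE2 : confusionEvent H ![1, 1] ![1, -1]
      = G ⁻¹' (Phi Nr ⁻¹' (Set.univ.pi fun _ : Fin Nr × Bool => Cset)) := by
    ext ω
    constructor
    · intro h
      intro c hc
      obtain ⟨m, b⟩ := c
      cases b
      · show sgn (G ω ((m, 0), false) + G ω ((m, 1), false))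
            = sgn (G ω ((m, 0), false) - G ω ((m, 1), false))
        rw [← hre ω m, ← hre2 ω m]
        exact (h m).1
      · show sgn (G ω ((m, 0), true) + G ω ((m, 1), true))
            = sgn (G ω ((m, 0), true) - G ω ((m, 1), true))
        rw [← him ω m, ← him2 ω m]
        exact (h m).2
    · intro h m
      have h1 := h (m, false) (Set.mem_univ _)
      have h2 := h (m, true) (Set.mem_univ _)
      constructor
      · rw [hre ω m, hre2 ω m]
        exact h1
      · rw [him ω m, him2 ω m]
        exact h2
  have hE3 : confusionEvent H ![1, 1] ![-1, 1]
      = G ⁻¹' (Phi Nr ⁻¹' (Set.univ.pi fun _ : Fin Nr × Bool => Cset')) := by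
    ext ω
    constructor
    · intro h
      intro c hc
      obtain ⟨m, b⟩ := c
      cases b
      · show sgn (G ω ((m, 0), false) + G ω ((m, 1), false))
            = sgn (G ω ((m, 1), false) - G ω ((m, 0), false))
        rw [← hre ω m, ← hre3 ω m]
        exact (h m).1
      · show sgn (G ω ((m, 0), true) + G ω ((m, 1), true))
            = sgn (G ω ((m, 1), true) - G ω ((m, 0), true))
        rw [← him ω m, ← him3 ω m]
        exact (h m).2
    · intro h m
      have h1 := h (m, false) (Set.mem_univ _)
      have h2 := h (m, true) (Set.mem_univ _)
      constructor
      · rw [hre ω m, hre3 ω m]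
        exact h1
      · rw [him ω m, him3 ω m]
        exact h2
  have hE4sub : confusionEvent H ![1, 1] ![-1, -1]
      ⊆ G ⁻¹' {f : ((Fin Nr × Fin 2) × Bool) → ℝ |
          f ((m0, 0), false) + f ((m0, 1), false) = 0} := by
    intro ω hω
    have h1 := (hω m0).1
    rw [hre, hre4] at h1
    exact sgn_eq_sgn_neg_iff.mp h1
  have hE23sub : confusionEvent H ![1, 1] ![1, -1] ∩ confusionEvent H ![1, 1] ![-1, 1]
      ⊆ G ⁻¹' {f : ((Fin Nr × Fin 2) × Bool) → ℝ |
          f ((m0, 0), false) - f ((m0, 1), false) = 0} := by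
    rintro ω ⟨hω2, hω3⟩
    have h2 := (hω2 m0).1
    have h3 := (hω3 m0).1
    rw [hre, hre2] at h2
    rw [hre, hre3] at h3
    have : sgn (G ω ((m0, 0), false) - G ω ((m0, 1), false))
        = sgn (-(G ω ((m0, 0), false) - G ω ((m0, 1), false))) := by
      rw [← h2, h3, neg_sub]
    exact sgn_eq_sgn_neg_iff.mp this
  -- measurability of target sets
  have hS2 : MeasurableSet (Phi Nr ⁻¹' (Set.univ.pi fun _ : Fin Nr × Bool => Cset)) :=
    (measurePreserving_Phi Nr).measurable (MeasurableSet.univ_pi fun _ => measurable_Cset)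
  have hS3 : MeasurableSet (Phi Nr ⁻¹' (Set.univ.pi fun _ : Fin Nr × Bool => Cset')) :=
    (measurePreserving_Phi Nr).measurable (MeasurableSet.univ_pi fun _ => measurable_Cset')
  -- probabilities
  have hP2 : P (confusionEvent H ![1, 1] ![1, -1]) = (1/2 : ℝ≥0∞) ^ (2 * Nr) := by
    rw [hE2, ← Measure.map_apply hG hS2, hlaw', muI_pi_Cset]
  have hP3 : P (confusionEvent H ![1, 1] ![-1, 1]) = (1/2 : ℝ≥0∞) ^ (2 * Nr) := by
    rw [hE3, ← Measure.map_apply hG hS3, hlaw', muI_pi_Cset']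
  have hP4 : P (confusionEvent H ![1, 1] ![-1, -1]) = 0 := by
    refine measure_mono_null hE4sub ?_
    have hL : MeasurableSet {f : ((Fin Nr × Fin 2) × Bool) → ℝ |
        f ((m0, 0), false) + f ((m0, 1), false) = 0} :=
      measurableSet_eq_fun (by fun_prop) measurable_const
    rw [← Measure.map_apply hG hL, hlaw']
    exact muI_null_sum Nr m0
  have hP23 : P (confusionEvent H ![1, 1] ![1, -1] ∩ confusionEvent H ![1, 1] ![-1, 1]) = 0 := by
    refine measure_mono_null hE23sub ?_
    have hL : MeasurableSet {f : ((Fin Nr × Fin 2) × Bool) → ℝ |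
        f ((m0, 0), false) - f ((m0, 1), false) = 0} :=
      measurableSet_eq_fun (by fun_prop) measurable_const
    rw [← Measure.map_apply hG hL, hlaw']
    exact muI_null_diff Nr m0
  have hunion2 : P (confusionEvent H ![1, 1] ![1, -1] ∪ confusionEvent H ![1, 1] ![-1, 1])
      = P (confusionEvent H ![1, 1] ![1, -1]) + P (confusionEvent H ![1, 1] ![-1, 1]) := by
    have := measure_union_add_inter (μ := P) (confusionEvent H ![1, 1] ![1, -1])
      (hE3 ▸ hG hS3 : MeasurableSet (confusionEvent H ![1, 1] ![-1, 1]))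
    rw [hP23, add_zero] at this
    exact this
  have hunion3 : P (confusionEvent H ![1, 1] ![1, -1] ∪ confusionEvent H ![1, 1] ![-1, 1] ∪
      confusionEvent H ![1, 1] ![-1, -1])
      = P (confusionEvent H ![1, 1] ![1, -1] ∪ confusionEvent H ![1, 1] ![-1, 1]) := by
    refine le_antisymm ?_ (measure_mono Set.subset_union_left)
    calc P (confusionEvent H ![1, 1] ![1, -1] ∪ confusionEvent H ![1, 1] ![-1, 1] ∪
        confusionEvent H ![1, 1] ![-1, -1])
        ≤ P (confusionEvent H ![1, 1] ![1, -1] ∪ confusionEvent H ![1, 1] ![-1, 1])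
          + P (confusionEvent H ![1, 1] ![-1, -1]) := measure_union_le _ _
      _ = P (confusionEvent H ![1, 1] ![1, -1] ∪ confusionEvent H ![1, 1] ![-1, 1]) := by
          rw [hP4, add_zero]
  refine ⟨hP4, hP23, hunion3.trans hunion2, ?_⟩
  rw [hunion3, hunion2, hP2, hP3]
  ring
end
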